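/- The Möbius–Kantor graph V_8 (the 8-cycle 1-2-3-4-5-6-7-8-1 together with the four diagonals 15, 26, 37, 48) is W_6-minor-free: it has no minor isomorphic to the wheel W_6. -/

import Mathlib

open SimpleGraph

/-- `H` is a minor of `G`: disjoint connected branch sets in `G`, one per vertex of `H`,
with an edge of `G` between branch sets of adjacent vertices of `H`. -/
def SimpleGraph.IsMinorOf {V W : Type*} (H : SimpleGraph W) (G : SimpleGraph V) : Prop :=
  ∃ B : W → Set V,
    (∀ w, (G.induce (B w)).Connected) ∧
    (Pairwise fun w₁ w₂ => Disjoint (B w₁) (B w₂)) ∧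
    (∀ w₁ w₂, H.Adj w₁ w₂ → ∃ x ∈ B w₁, ∃ y ∈ B w₂, G.Adj x y)

/-- The wheel `W₆`: hub `0` joined to the 6-cycle `1-2-3-4-5-6-1`. -/
def W6 : SimpleGraph (Fin 7) := SimpleGraph.fromEdgeSet
  {s(0,1), s(0,2), s(0,3), s(0,4), s(0,5), s(0,6),
   s(1,2), s(2,3), s(3,4), s(4,5), s(5,6), s(6,1)}

/-- `V₈`: the 8-cycle (vertices `0,…,7` standing for `1,…,8`) plus the four diagonals. -/
def V8 : SimpleGraph (Fin 8) := SimpleGraph.fromEdgeSet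
  {s(0,1), s(1,2), s(2,3), s(3,4), s(4,5), s(5,6), s(6,7), s(7,0),
   s(0,4), s(1,5), s(2,6), s(3,7)}

/-- `V₈` is `W₆`-minor-free. -/
instance : DecidableRel V8.Adj := fun a b =>
  decidable_of_iff
    ((s(a,b) = s(0,1) ∨ s(a,b) = s(1,2) ∨ s(a,b) = s(2,3) ∨ s(a,b) = s(3,4) ∨ s(a,b) = s(4,5) ∨ s(a,b) = s(5,6) ∨ s(a,b) = s(6,7) ∨ s(a,b) = s(7,0) ∨ s(a,b) = s(0,4) ∨ s(a,b) = s(1,5) ∨ s(a,b) = s(2,6) ∨ s(a,b) = s(3,7)) ∧ a ≠ b)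
    (by rw [V8, fromEdgeSet_adj]; simp [Set.mem_insert_iff])

instance : DecidableRel W6.Adj := fun a b =>
  decidable_of_iff
    ((s(a,b) = s(0,1) ∨ s(a,b) = s(0,2) ∨ s(a,b) = s(0,3) ∨ s(a,b) = s(0,4) ∨ s(a,b) = s(0,5) ∨ s(a,b) = s(0,6) ∨ s(a,b) = s(1,2) ∨ s(a,b) = s(2,3) ∨ s(a,b) = s(3,4) ∨ s(a,b) = s(4,5) ∨ s(a,b) = s(5,6) ∨ s(a,b) = s(6,1)) ∧ a ≠ b)
    (by rw [W6, fromEdgeSet_adj]; simp [Set.mem_insert_iff])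

lemma deg3 : ∀ a : Fin 8, (V8.neighborFinset a).card = 3 := by decide
lemma card4 : ∀ a b : Fin 8, V8.Adj a b →
    ((V8.neighborFinset a ∪ V8.neighborFinset b) \ {a,b}).card ≤ 4 := by decide
lemma hubadj : ∀ i : Fin 6, W6.Adj 0 i.succ := by decide

theorem stmt4 : ¬ W6.IsMinorOf V8 := by
  rintro ⟨B, hconn, hdisj, hadj⟩
  have hzall : ∀ w : Fin 7, ∃ v, v ∈ B w := fun w =>
    (hconn w).nonempty.elim fun v => ⟨v.1, v.2⟩
  choose z hz using hzall
  have key : ∀ i : Fin 6, ∃ x ∈ B 0, ∃ y ∈ B i.succ, V8.Adj x y :=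
    fun i => hadj 0 i.succ (hubadj i)
  choose x hx y hy hxy using key
  have hdisj' : ∀ {w1 w2 : Fin 7}, w1 ≠ w2 → ∀ {v : Fin 8}, v ∈ B w1 → v ∉ B w2 :=
    fun h _ hv => Set.disjoint_left.mp (hdisj h) hv
  have hYinj : Function.Injective y := by
    intro i j hij
    by_contra hne
    exact hdisj' (fun h => hne (Fin.succ_injective _ h)) (hy i) (hij ▸ hy j)
  have hyB0 : ∀ i, y i ∉ B 0 := fun i => hdisj' (Fin.succ_ne_zero i) (hy i)
  set Z : Fin 6 → Fin 8 := fun i => z i.succ with hZ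
  have hZinj : Function.Injective Z := by
    intro i j hij
    by_contra hne
    have hij' : z i.succ = z j.succ := hij
    exact hdisj' (fun h => hne (Fin.succ_injective _ h)) (hz i.succ) (hij' ▸ hz j.succ)
  have hZB0 : ∀ i, Z i ∉ B 0 := fun i => hdisj' (Fin.succ_ne_zero i) (hz i.succ)
  -- B 0 has no three distinct elements
  have hno3 : ∀ a ∈ B 0, ∀ b ∈ B 0, ∀ c ∈ B 0, a ≠ b → a ≠ c → b ≠ c → False := by
    intro a ha b hb c hc hab hac hbc
    have hia : a ∉ Finset.image Z Finset.univ := by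
      simp only [Finset.mem_image]
      rintro ⟨i, -, rfl⟩; exact hZB0 i ha
    have hib : b ∉ Finset.image Z Finset.univ := by
      simp only [Finset.mem_image]
      rintro ⟨i, -, rfl⟩; exact hZB0 i hb
    have hic : c ∉ Finset.image Z Finset.univ := by
      simp only [Finset.mem_image]
      rintro ⟨i, -, rfl⟩; exact hZB0 i hc
    have hT : (insert a (insert b (insert c (Finset.image Z Finset.univ)))).card = 9 := by
      rw [Finset.card_insert_of_notMem (by simp [hab, hac, hia]),
        Finset.card_insert_of_notMem (by simp [hbc, hib]),
        Finset.card_insert_of_notMem hic,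
        Finset.card_image_of_injective _ hZinj]
      simp
    have hle := Finset.card_le_univ (insert a (insert b (insert c (Finset.image Z Finset.univ))))
    rw [hT] at hle
    simp at hle
  obtain ⟨a, ha⟩ : ∃ a, a ∈ B 0 := ⟨z 0, hz 0⟩
  by_cases hb : ∃ b ∈ B 0, b ≠ a
  · obtain ⟨b, hbB, hba⟩ := hb
    have hsub : B 0 ⊆ {a, b} := by
      intro u hu
      by_contra h
      simp only [Set.mem_insert_iff, Set.mem_singleton_iff, not_or] at h
      exact hno3 u hu a ha b hbB h.1 h.2 (Ne.symm hba)
    have hab' : V8.Adj a b := by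
      obtain ⟨p⟩ := (hconn 0).preconnected ⟨a, ha⟩ ⟨b, hbB⟩
      have hnil : ¬ p.Nil := by
        intro h
        exact hba (congrArg Subtype.val (Walk.Nil.eq h)).symm
      have hadj2 : (induce (B 0) V8).Adj ⟨a, ha⟩ (p.getVert 1) := Walk.adj_snd hnil
      rw [comap_adj] at hadj2
      simp only [Function.Embedding.coe_subtype] at hadj2
      have hmem : ((p.getVert 1 : B 0) : Fin 8) ∈ B 0 := (p.getVert 1).2
      rcases hsub hmem with h | h
      · rw [h] at hadj2; exact absurd hadj2 (V8.loopless.irrefl a)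
      · rw [Set.mem_singleton_iff] at h; rw [h] at hadj2; exact hadj2
    have hmemS : ∀ i, y i ∈ (V8.neighborFinset a ∪ V8.neighborFinset b) \ ({a, b} : Finset (Fin 8)) := by
      intro i
      rw [Finset.mem_sdiff, Finset.mem_union, mem_neighborFinset, mem_neighborFinset]
      constructor
      · rcases hsub (hx i) with h | h
        · exact Or.inl (h ▸ hxy i)
        · exact Or.inr (h ▸ hxy i)
      · simp only [Finset.mem_insert, Finset.mem_singleton, not_or]
        exact ⟨fun h => hyB0 i (h ▸ ha), fun h => hyB0 i (h ▸ hbB)⟩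
    have hle := Finset.card_le_card_of_injOn (s := Finset.univ) y (fun i _ => hmemS i) hYinj.injOn
    have := card4 a b hab'
    simp only [Finset.card_univ, Fintype.card_fin] at hle
    omega
  · push_neg at hb
    have hmemS : ∀ i, y i ∈ V8.neighborFinset a := by
      intro i
      rw [mem_neighborFinset]
      have := hb (x i) (hx i)
      exact this ▸ hxy i
    have hle := Finset.card_le_card_of_injOn (s := Finset.univ) y (fun i _ => hmemS i) hYinj.injOn
    rw [deg3] at hle
    simp only [Finset.card_univ, Fintype.card_fin] at hle
    omega
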